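/- For v ∈ (0, 1/2) and any open connected arc U ⊆ A₁ \ (A₁₂ ∪ A₁₃), the image K₁(U) is a connected arc whose length satisfies |K₁(U)| ≥ c·|U| where c = (1-v²)/(v² + 1 - 2v·cos(2π/3 - arccos v)) > 1. -/

import Mathlib

open Real MeasureTheory

lemma hasDerivAt_K (v : ℝ) (hv0 : 0 < v) (hv1 : v < 1) (φ : ℝ)
    (hc : 0 < Real.cos (φ / 2)) :
    HasDerivAt (fun φ : ℝ => π - 2 * Real.arctan ((1 + v) / (1 - v) * Real.tan (φ / 2)))
      (-((1 - v ^ 2) / (v ^ 2 + 1 - 2 * v * Real.cos φ))) φ := by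
  have h1 : HasDerivAt (fun φ : ℝ => φ / 2) (1 / 2) φ := by
    simpa using (hasDerivAt_id φ).div_const 2
  have h2 : HasDerivAt Real.tan (1 / Real.cos (φ / 2) ^ 2) (φ / 2) :=
    Real.hasDerivAt_tan hc.ne'
  have h4 : HasDerivAt (fun φ : ℝ => (1 + v) / (1 - v) * Real.tan (φ / 2))
      ((1 + v) / (1 - v) * (1 / Real.cos (φ / 2) ^ 2 * (1 / 2))) φ :=
    (h2.comp φ h1).const_mul _
  have h5 := (Real.hasDerivAt_arctan ((1 + v) / (1 - v) * Real.tan (φ / 2))).comp φ h4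
  have h6 := (h5.const_mul (2:ℝ)).const_sub π
  refine h6.congr_deriv ?_
  symm
  have hs : Real.sin (φ / 2) ^ 2 + Real.cos (φ / 2) ^ 2 = 1 := Real.sin_sq_add_cos_sq _
  have hφ : Real.cos φ = 2 * Real.cos (φ / 2) ^ 2 - 1 := by
    have h := Real.cos_two_mul (φ / 2)
    rw [show 2 * (φ / 2) = φ by ring] at h
    exact h
  have ht : Real.tan (φ / 2) = Real.sin (φ / 2) / Real.cos (φ / 2) := Real.tan_eq_sin_div_cos _
  have hv1' : (1 : ℝ) - v ≠ 0 := by linarith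
  have hs2 : Real.sin (φ / 2) ^ 2 = 1 - Real.cos (φ / 2) ^ 2 := by linarith
  have hden : v ^ 2 + 1 - 2 * v * Real.cos φ > 0 := by
    nlinarith [Real.neg_one_le_cos φ, Real.cos_le_one φ]
  rw [hφ] at hden
  have hpos : 0 < (1 - v) ^ 2 * Real.cos (φ / 2) ^ 2
      + (1 + v) ^ 2 * (1 - Real.cos (φ / 2) ^ 2) := by
    nlinarith [hs2, sq_nonneg (Real.sin (φ / 2)), hc]
  have hX : 1 + ((1 + v) / (1 - v) * Real.tan (φ / 2)) ^ 2
      = ((1 - v) ^ 2 * Real.cos (φ / 2) ^ 2 + (1 + v) ^ 2 * (1 - Real.cos (φ / 2) ^ 2))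
        / ((1 - v) ^ 2 * Real.cos (φ / 2) ^ 2) := by
    rw [ht, mul_pow, div_pow, div_pow, hs2]
    field_simp
  rw [hφ, hX]
  rw [one_div_div]
  field_simp
  ring

/-- For `v ∈ (0,1/2)` and any open connected arc
`U ⊆ A₁ \ (A₁₂ ∪ A₁₃) = (arccos v - 2π/3, 2π/3 - arccos v)`, the image of `U` under the Kasner map
`K₁(φ) = π - 2·arctan(((1+v)/(1-v))·tan(φ/2))` is a connected arc whose angular length satisfies
`|K₁(U)| ≥ c·|U|` where `c = (1-v²)/(v² + 1 - 2v·cos(2π/3 - arccos v)) > 1`. -/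
theorem image_length_expansion (v : ℝ) (hv : v ∈ Set.Ioo (0:ℝ) (1/2))
    (U : Set ℝ) (hUopen : IsOpen U) (hUconn : IsPreconnected U)
    (hUsub : U ⊆ Set.Ioo (Real.arccos v - 2*π/3) (2*π/3 - Real.arccos v)) :
    IsPreconnected ((fun φ : ℝ => π - 2 * Real.arctan ((1 + v) / (1 - v) * Real.tan (φ / 2))) '' U) ∧
    (1 - v ^ 2) / (v ^ 2 + 1 - 2 * v * Real.cos (2*π/3 - Real.arccos v)) > 1 ∧
    ENNReal.ofReal ((1 - v ^ 2) / (v ^ 2 + 1 - 2 * v * Real.cos (2*π/3 - Real.arccos v)))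
        * volume U
      ≤ volume ((fun φ : ℝ => π - 2 * Real.arctan ((1 + v) / (1 - v) * Real.tan (φ / 2))) '' U) := by
  obtain ⟨hv0, hv2⟩ := hv
  have hπ := Real.pi_pos
  have hv1 : v < 1 := by linarith
  set f : ℝ → ℝ := fun φ : ℝ => π - 2 * Real.arctan ((1 + v) / (1 - v) * Real.tan (φ / 2)) with hf
  set θ : ℝ := 2*π/3 - Real.arccos v with hθ
  clear_value θ
  have hacos1 : Real.arccos v < π/2 := Real.arccos_lt_pi_div_two.mpr hv0
  have hpid3 : π/3 = Real.arccos (1/2) := by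
    rw [show (1:ℝ)/2 = Real.cos (π/3) by rw [Real.cos_pi_div_three]]
    rw [Real.arccos_cos (by positivity) (by linarith)]
  have hacos2 : π/3 < Real.arccos v := by
    rw [hpid3]
    exact Real.strictAntiOn_arccos ⟨by linarith, by linarith⟩
      ⟨by norm_num, by norm_num⟩ hv2
  have hθpos : 0 < θ := by rw [hθ]; linarith
  have hθlt : θ < π/3 := by rw [hθ]; linarith
  have hcθ : 1/2 < Real.cos θ := by
    rw [show (1:ℝ)/2 = Real.cos (π/3) by rw [Real.cos_pi_div_three]]
    exact Real.cos_lt_cos_of_nonneg_of_le_pi hθpos.le (by linarith) hθlt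
  have hD0 : 0 < v ^ 2 + 1 - 2 * v * Real.cos θ := by
    nlinarith [Real.cos_le_one θ]
  have hc1 : (1 - v ^ 2) / (v ^ 2 + 1 - 2 * v * Real.cos θ) > 1 := by
    rw [gt_iff_lt, lt_div_iff₀ hD0]
    nlinarith
  have hUsub' : U ⊆ Set.Ioo (-θ) θ := by
    intro x hx
    have := hUsub hx
    constructor
    · rw [hθ]; have := this.1; linarith
    · exact this.2
  -- positivity of cos (φ/2) on [-θ, θ]
  have hcos : ∀ φ ∈ Set.Icc (-θ) θ, 0 < Real.cos (φ / 2) := by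
    intro φ hφ
    apply Real.cos_pos_of_mem_Ioo
    constructor
    · have := hφ.1; nlinarith
    · have := hφ.2; nlinarith
  have hcontU : ContinuousOn f U := by
    intro x hx
    have hx' := hUsub' hx
    exact (hasDerivAt_K v hv0 hv1 x (hcos x ⟨hx'.1.le, hx'.2.le⟩)).continuousAt.continuousWithinAt
  refine ⟨hUconn.image f hcontU, hc1, ?_⟩
  rcases U.eq_empty_or_nonempty with hUe | hne
  · simp [hUe]
  -- U is a nonempty open interval
  have hbb : BddBelow U := ⟨-θ, fun x hx => (hUsub' hx).1.le⟩
  have hba : BddAbove U := ⟨θ, fun x hx => (hUsub' hx).2.le⟩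
  have hanm : sInf U ∉ U := by
    intro haU
    obtain ⟨ε, hε, hball⟩ := Metric.isOpen_iff.mp hUopen _ haU
    have hmem : sInf U - ε/2 ∈ U := by
      apply hball
      rw [Metric.mem_ball, Real.dist_eq, show sInf U - ε/2 - sInf U = -(ε/2) by ring,
        abs_neg, abs_of_nonneg (by linarith)]
      linarith
    have := csInf_le hbb hmem
    linarith
  have hbnm : sSup U ∉ U := by
    intro hbU
    obtain ⟨ε, hε, hball⟩ := Metric.isOpen_iff.mp hUopen _ hbU
    have hmem : sSup U + ε/2 ∈ U := by
      apply hball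
      rw [Metric.mem_ball, Real.dist_eq, show sSup U + ε/2 - sSup U = ε/2 by ring,
        abs_of_nonneg (by linarith)]
      linarith
    have := le_csSup hba hmem
    linarith
  have hUIoo' : U = Set.Ioo (sInf U) (sSup U) := by
    apply Set.Subset.antisymm
    · intro x hx
      refine ⟨lt_of_le_of_ne (csInf_le hbb hx) ?_, lt_of_le_of_ne (le_csSup hba hx) ?_⟩
      · intro h; exact hanm (h ▸ hx)
      · intro h; exact hbnm (h ▸ hx)
    · rintro x ⟨hax, hxb⟩
      obtain ⟨u, huU, hux⟩ := exists_lt_of_csInf_lt hne hax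
      obtain ⟨w, hwU, hxw⟩ := exists_lt_of_lt_csSup hne hxb
      exact hUconn.ordConnected.out huU hwU ⟨hux.le, hxw.le⟩
  have hab' : sInf U < sSup U := Set.nonempty_Ioo.mp (hUIoo' ▸ hne)
  obtain ⟨a, b, hab, hUIoo⟩ : ∃ a b, a < b ∧ U = Set.Ioo a b :=
    ⟨sInf U, sSup U, hab', hUIoo'⟩
  obtain ⟨haθ, hbθ⟩ : -θ ≤ a ∧ b ≤ θ :=
    (Set.Ioo_subset_Ioo_iff hab).mp (hUIoo ▸ hUsub')
  have hIcc : Set.Icc a b ⊆ Set.Icc (-θ) θ := Set.Icc_subset_Icc haθ hbθ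
  have hder : ∀ x ∈ Set.Icc a b,
      HasDerivAt f (-((1 - v ^ 2) / (v ^ 2 + 1 - 2 * v * Real.cos x))) x :=
    fun x hx => hasDerivAt_K v hv0 hv1 x (hcos x (hIcc hx))
  have hcont : ContinuousOn f (Set.Icc a b) :=
    fun x hx => (hder x hx).continuousAt.continuousWithinAt
  obtain ⟨ξ, hξ, hslope⟩ := exists_hasDerivAt_eq_slope f
      (fun x => -((1 - v ^ 2) / (v ^ 2 + 1 - 2 * v * Real.cos x))) hab hcont
      (fun x hx => hder x (Set.Ioo_subset_Icc_self hx))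
  have hξθ : Real.cos θ ≤ Real.cos ξ := by
    have h1 : -θ < ξ := lt_of_le_of_lt haθ hξ.1
    have h2 : ξ < θ := lt_of_lt_of_le hξ.2 hbθ
    rw [← Real.cos_abs ξ]
    apply Real.cos_le_cos_of_nonneg_of_le_pi (abs_nonneg ξ) (by linarith)
    rw [abs_le]; exact ⟨h1.le, h2.le⟩
  have hDξ : 0 < v ^ 2 + 1 - 2 * v * Real.cos ξ := by
    nlinarith [Real.cos_le_one ξ]
  have hslope' : f a - f b
      = (1 - v ^ 2) / (v ^ 2 + 1 - 2 * v * Real.cos ξ) * (b - a) := by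
    have h := hslope
    rw [eq_div_iff (by intro hh; rw [sub_eq_zero] at hh; exact absurd hh.symm hab.ne : b - a ≠ 0)] at h
    linear_combination h
  have hkey : (1 - v ^ 2) / (v ^ 2 + 1 - 2 * v * Real.cos θ) * (b - a) ≤ f a - f b := by
    rw [hslope']
    apply mul_le_mul_of_nonneg_right _ (by linarith)
    gcongr
    · nlinarith

  have himg : Set.Ioo (f b) (f a) ⊆ f '' U := by
    rw [hUIoo]
    exact intermediate_value_Ioo' hab.le hcont
  calc ENNReal.ofReal ((1 - v ^ 2) / (v ^ 2 + 1 - 2 * v * Real.cos θ)) * volume U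
      = ENNReal.ofReal ((1 - v ^ 2) / (v ^ 2 + 1 - 2 * v * Real.cos θ) * (b - a)) := by
        rw [hUIoo, Real.volume_Ioo, ← ENNReal.ofReal_mul (by positivity)]
    _ ≤ ENNReal.ofReal (f a - f b) := ENNReal.ofReal_le_ofReal hkey
    _ = volume (Set.Ioo (f b) (f a)) := by rw [Real.volume_Ioo]
    _ ≤ volume (f '' U) := measure_mono himg
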